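/- Let ν be a Lévy measure on ℝ^d satisfying ν(A) ≤ ∫_S ∫_0^∞ 1_A(sθ) s^{−1−α} q(s) φ(s) ds μ(dθ) for all Borel A, where α ∈ (0,2), q and φ are bounded nonincreasing positive functions on [0,∞), μ is a finite nonnegative measure on the unit sphere S, γ ∈ [1,d], and μ(S ∩ B(θ,ρ)) ≤ c ρ^{γ−1} for all θ ∈ S, ρ > 0. Then there is a constant c' > 0 such that for every nonempty Borel set A ⊂ ℝ^d with δ(A) := dist(0,A) > 0 and finite diameter diam(A), ν(A) ≤ c' · δ(A)^{−γ−α} · q(δ(A)) · φ(δ(A)) · diam(A)^γ. -/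

import Mathlib

open MeasureTheory Metric Set
open scoped ENNReal RealInnerProductSpace

noncomputable section

/-- `ℝ^d` with the Euclidean norm. -/
abbrev Euc (d : ℕ) := EuclideanSpace ℝ (Fin d)

/-- The characteristic function `ξ ↦ ∫ e^{i⟨ξ,y⟩} P(dy)` of a measure `P` on `ℝ^d`. -/
def charFn {d : ℕ} (P : Measure (Euc d)) (ξ : Euc d) : ℂ :=
  ∫ y, Complex.exp (Complex.I * (⟪ξ, y⟫ : ℝ)) ∂P

/-- The Lévy–Khinchin exponent
`Φ(ξ) = −∫ (e^{i⟨ξ,y⟩} − 1 − i⟨ξ,y⟩ 1_{B(0,1)}(y)) ν(dy) − i⟨ξ,b⟩`. -/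
def lkExp {d : ℕ} (ν : Measure (Euc d)) (b : Euc d) (ξ : Euc d) : ℂ :=
  -∫ y, (Complex.exp (Complex.I * (⟪ξ, y⟫ : ℝ)) - 1
      - Complex.I * (⟪ξ, y⟫ : ℝ) * ((ball (0 : Euc d) 1).indicator (fun _ => (1:ℝ)) y : ℂ)) ∂ν
    - Complex.I * (⟪ξ, b⟫ : ℝ)

/-- `ν` is a Lévy measure: `∫ min(1,|y|²) ν(dy) < ∞`. -/
def IsLevyMeasure {d : ℕ} (ν : Measure (Euc d)) : Prop :=
  ∫⁻ y, ENNReal.ofReal (min 1 (‖y‖ ^ 2)) ∂ν < ⊤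

/-- Assumption (i): `ν(A) ≤ ∫_S ∫_0^∞ 1_A(sθ) s^{−1−α} q(s) φ(s) ds μ(dθ)` for all Borel `A`. -/
def RadialDom {d : ℕ} (ν μ : Measure (Euc d)) (α : ℝ) (q φ : ℝ → ℝ) : Prop :=
  ∀ A : Set (Euc d), MeasurableSet A →
    ν A ≤ ∫⁻ θ, (∫⁻ s in Set.Ioi (0:ℝ),
      A.indicator (fun _ => (1:ℝ≥0∞)) (s • θ) * ENNReal.ofReal (s ^ (-1-α) * q s * φ s)) ∂μ

/-- A function `(0,∞) ∋ s ↦ q(s)` which is positive, bounded and nonincreasing on `[0,∞)`. -/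
def BddAnti (q : ℝ → ℝ) : Prop :=
  (∀ s, 0 ≤ s → 0 < q s) ∧ (∃ Cb, ∀ s, 0 ≤ s → q s ≤ Cb) ∧
    (∀ s t, 0 ≤ s → s ≤ t → q t ≤ q s)

/-- Assumption (vi): `μ` lives on the unit sphere and is a `(γ−1)`-measure there. -/
def GammaMeasure {d : ℕ} (μ : Measure (Euc d)) (γ cμ : ℝ) : Prop :=
  (μ (sphere (0 : Euc d) 1)ᶜ = 0) ∧
  ∀ θ : Euc d, ‖θ‖ = 1 → ∀ ρ > (0:ℝ),
    μ (sphere (0 : Euc d) 1 ∩ ball θ ρ) ≤ ENNReal.ofReal (cμ * ρ ^ (γ - 1))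

/-- estimate (11). Under the radial domination (i) and the `(γ−1)`-measure
condition (vi), there is `c' > 0` such that for every Borel set `A` with `δ(A) > 0` and finite
diameter, `ν(A) ≤ c' δ(A)^{−γ−α} q(δ(A)) φ(δ(A)) diam(A)^γ`. -/
theorem statement4 {d : ℕ} (α γ cμ : ℝ) (hα : 0 < α) (hα2 : α < 2)
    (hγ1 : 1 ≤ γ) (hγd : γ ≤ (d : ℝ)) (hcμ : 0 ≤ cμ)
    (q φ : ℝ → ℝ) (hq : BddAnti q) (hφ : BddAnti φ)
    (ν μ : Measure (Euc d)) [IsFiniteMeasure μ] (hlevy : IsLevyMeasure ν)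
    (hdom : RadialDom ν μ α q φ) (hμγ : GammaMeasure μ γ cμ) :
    ∃ c' > (0:ℝ), ∀ A : Set (Euc d), MeasurableSet A → A.Nonempty →
      Bornology.IsBounded A → 0 < infDist (0 : Euc d) A →
      ν A ≤ ENNReal.ofReal (c' * infDist (0 : Euc d) A ^ (-γ-α) *
        q (infDist (0 : Euc d) A) * φ (infDist (0 : Euc d) A) * diam A ^ γ) := by
  refine ⟨(3:ℝ) ^ (γ-1) * cμ + 1, by positivity, ?_⟩
  intro A hA hne hbd hδ
  obtain ⟨x0, hx0⟩ := hne
  set δ := infDist (0 : Euc d) A with hδdef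
  set D := diam A with hDdef
  have hD0 : 0 ≤ D := diam_nonneg
  have hqδ : 0 < q δ := hq.1 δ hδ.le
  have hφδ : 0 < φ δ := hφ.1 δ hδ.le
  have F1 : ∀ x ∈ A, δ ≤ ‖x‖ := by
    intro x hx
    simpa using infDist_le_dist_of_mem (x := (0 : Euc d)) hx
  have F2 : ∀ x ∈ A, ‖x‖ ≤ δ + D := by
    intro x hx
    simpa using dist_le_infDist_add_diam (x := (0 : Euc d)) hbd hx
  have hx0norm : 0 < ‖x0‖ := lt_of_lt_of_le hδ (F1 x0 hx0)
  rcases eq_or_lt_of_le hD0 with hD | hD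
  · -- diam A = 0 : A is a singleton and ν A = 0
    have hsub : A ⊆ {x0} := by
      intro x hx
      have h1 : dist x x0 ≤ D := dist_le_diam_of_mem hbd hx hx0
      have h2 : dist x x0 = 0 := le_antisymm (by linarith) dist_nonneg
      simpa [dist_eq_zero] using h2
    have hzero : ∀ θ : Euc d, (∫⁻ s in Set.Ioi (0:ℝ),
        A.indicator (fun _ => (1:ℝ≥0∞)) (s • θ) *
          ENNReal.ofReal (s ^ (-1-α) * q s * φ s)) = 0 := by
      intro θ
      have hbadss : Set.Subsingleton {s : ℝ | s • θ ∈ A} := by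
        intro s hs t ht
        have hs' : s • θ = x0 := hsub hs
        have ht' : t • θ = x0 := hsub ht
        have hθ : θ ≠ 0 := by
          rintro rfl
          rw [smul_zero] at hs'
          exact (norm_pos_iff.mp hx0norm) hs'.symm
        exact smul_left_injective ℝ hθ (hs'.trans ht'.symm)
      have hbad : (volume : Measure ℝ) {s : ℝ | s • θ ∈ A} = 0 :=
        hbadss.countable.measure_zero _
      have hae : ∀ᵐ s ∂(volume : Measure ℝ),
          A.indicator (fun _ => (1:ℝ≥0∞)) (s • θ) *
            ENNReal.ofReal (s ^ (-1-α) * q s * φ s) = 0 := by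
        rw [ae_iff]
        refine measure_mono_null ?_ hbad
        intro s hs
        by_contra h
        have h' : s • θ ∉ A := h
        exact hs (by rw [Set.indicator_of_notMem h', zero_mul])
      calc (∫⁻ s in Set.Ioi (0:ℝ), A.indicator (fun _ => (1:ℝ≥0∞)) (s • θ) *
              ENNReal.ofReal (s ^ (-1-α) * q s * φ s))
          = ∫⁻ _ in Set.Ioi (0:ℝ), (0:ℝ≥0∞) :=
            lintegral_congr_ae (ae_restrict_of_ae hae)
        _ = 0 := lintegral_zero
    have hν0 : ν A ≤ 0 := by
      refine le_trans (hdom A hA) (le_of_eq ?_)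
      simp [hzero]
    rw [← hD, Real.zero_rpow (by linarith : γ ≠ 0)]
    simpa using hν0
  · -- diam A > 0
    set θ0 : Euc d := ‖x0‖⁻¹ • x0 with hθ0def
    have hθ0norm : ‖θ0‖ = 1 := by
      rw [hθ0def, norm_smul, Real.norm_eq_abs, abs_inv, abs_of_pos hx0norm,
        inv_mul_cancel₀ (ne_of_gt hx0norm)]
    set ρ : ℝ := 3 * D / δ with hρdef
    have hρ : 0 < ρ := by positivity
    set cap : Set (Euc d) := sphere (0 : Euc d) 1 ∩ ball θ0 ρ with hcapdef
    set c : ℝ≥0∞ := ENNReal.ofReal (δ ^ (-1-α) * q δ * φ δ) with hcdef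
    set K : ℝ≥0∞ := c * ENNReal.ofReal D with hKdef
    -- geometric claim : support directions lie in a small cap
    have geom : ∀ θ : Euc d, ‖θ‖ = 1 → ∀ s : ℝ, 0 < s → s • θ ∈ A → θ ∈ ball θ0 ρ := by
      intro θ hθ s hs hmem
      have hsnorm : ‖s • θ‖ = s := by
        rw [norm_smul, hθ, Real.norm_eq_abs, abs_of_pos hs, mul_one]
      have hδs : δ ≤ s := hsnorm ▸ F1 _ hmem
      have hdist : ‖s • θ - x0‖ ≤ D := by
        rw [← dist_eq_norm]; exact dist_le_diam_of_mem hbd hmem hx0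
      have hn : |‖x0‖ - s| ≤ D := by
        have h := abs_norm_sub_norm_le x0 (s • θ)
        rw [hsnorm, ← dist_eq_norm, dist_comm, ← hsnorm, dist_eq_norm] at h
        calc |‖x0‖ - s| ≤ ‖s • θ - x0‖ := by rw [hsnorm] at h; linarith [h]
          _ ≤ D := hdist
      have hkey : θ - θ0 = s⁻¹ • (s • θ - x0) + (s⁻¹ - ‖x0‖⁻¹) • x0 := by
        rw [smul_sub, smul_smul, inv_mul_cancel₀ (ne_of_gt hs), one_smul, sub_smul, hθ0def]
        abel
      have hbound : ‖θ - θ0‖ ≤ 2 * D / s := by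
        rw [hkey]
        have step : |s⁻¹ - ‖x0‖⁻¹| * ‖x0‖ ≤ s⁻¹ * D := by
          have h1 : |s⁻¹ - ‖x0‖⁻¹| * ‖x0‖ = |‖x0‖ - s| / s := by
            rw [abs_sub_comm, inv_sub_inv (ne_of_gt hx0norm) (ne_of_gt hs),
              abs_div, abs_of_pos (mul_pos hx0norm hs), abs_sub_comm]
            field_simp
          rw [h1, div_le_iff₀ hs]
          calc |‖x0‖ - s| ≤ D := hn
            _ = s⁻¹ * D * s := by field_simp
        calc ‖s⁻¹ • (s • θ - x0) + (s⁻¹ - ‖x0‖⁻¹) • x0‖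
            ≤ ‖s⁻¹ • (s • θ - x0)‖ + ‖(s⁻¹ - ‖x0‖⁻¹) • x0‖ := norm_add_le _ _
          _ = s⁻¹ * ‖s • θ - x0‖ + |s⁻¹ - ‖x0‖⁻¹| * ‖x0‖ := by
              rw [norm_smul, norm_smul, Real.norm_eq_abs, Real.norm_eq_abs,
                abs_of_pos (inv_pos.mpr hs)]
          _ ≤ s⁻¹ * D + s⁻¹ * D :=
              add_le_add (mul_le_mul_of_nonneg_left hdist (inv_nonneg.mpr hs.le)) step
          _ = 2 * D / s := by field_simp; ring
      have hlt : ‖θ - θ0‖ < ρ := by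
        have h2 : 2 * D / s ≤ 2 * D / δ :=
          div_le_div_of_nonneg_left (by linarith) hδ hδs
        have h3 : 2 * D / δ < 3 * D / δ := by
          rw [div_lt_div_iff₀ hδ hδ]
          nlinarith [mul_pos hD hδ]
        calc ‖θ - θ0‖ ≤ 2 * D / s := hbound
          _ ≤ 2 * D / δ := h2
          _ < ρ := by rw [hρdef]; exact h3
      rwa [mem_ball, dist_eq_norm]
    -- inner integral bound
    have inner_bound : ∀ θ : Euc d, ‖θ‖ = 1 →
        (∫⁻ s in Set.Ioi (0:ℝ), A.indicator (fun _ => (1:ℝ≥0∞)) (s • θ) *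
          ENNReal.ofReal (s ^ (-1-α) * q s * φ s)) ≤ cap.indicator (fun _ => K) θ := by
      intro θ hθ
      by_cases hmem : θ ∈ ball θ0 ρ
      · have hcap : θ ∈ cap := ⟨mem_sphere_zero_iff_norm.mpr hθ, hmem⟩
        rw [Set.indicator_of_mem hcap]
        have hle : (∫⁻ s in Set.Ioi (0:ℝ), A.indicator (fun _ => (1:ℝ≥0∞)) (s • θ) *
            ENNReal.ofReal (s ^ (-1-α) * q s * φ s)) ≤
            ∫⁻ s in Set.Ioi (0:ℝ), (Set.Icc δ (δ+D)).indicator (fun _ => c) s := by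
          refine setLIntegral_mono (measurable_const.indicator measurableSet_Icc) ?_
          intro s hs
          rcases em (s • θ ∈ A) with hsA | hsA
          · have hsnorm : ‖s • θ‖ = s := by
              rw [norm_smul, hθ, Real.norm_eq_abs, abs_of_pos (mem_Ioi.mp hs), mul_one]
            have h1 : δ ≤ s := hsnorm ▸ F1 _ hsA
            have h2 : s ≤ δ + D := hsnorm ▸ F2 _ hsA
            have hs0 : 0 < s := lt_of_lt_of_le hδ h1
            rw [Set.indicator_of_mem hsA, one_mul,
              Set.indicator_of_mem (Set.mem_Icc.mpr ⟨h1, h2⟩), hcdef]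
            apply ENNReal.ofReal_le_ofReal
            have hr : s ^ (-1-α) ≤ δ ^ (-1-α) :=
              Real.rpow_le_rpow_of_nonpos hδ h1 (by linarith)
            have hqs : q s ≤ q δ := hq.2.2 δ s hδ.le h1
            have hφs : φ s ≤ φ δ := hφ.2.2 δ s hδ.le h1
            have hqs0 : 0 < q s := hq.1 s hs0.le
            have hφs0 : 0 < φ s := hφ.1 s hs0.le
            have hδr : (0:ℝ) ≤ δ ^ (-1-α) := Real.rpow_nonneg hδ.le _
            exact mul_le_mul (mul_le_mul hr hqs hqs0.le hδr) hφs hφs0.le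
              (by positivity)
          · rw [Set.indicator_of_notMem hsA, zero_mul]
            exact zero_le
        refine hle.trans ?_
        rw [lintegral_indicator measurableSet_Icc, setLIntegral_const,
          Measure.restrict_apply measurableSet_Icc]
        rw [hKdef]
        refine mul_le_mul_right ?_ c
        calc (volume : Measure ℝ) (Set.Icc δ (δ+D) ∩ Set.Ioi 0)
            ≤ volume (Set.Icc δ (δ+D)) := measure_mono Set.inter_subset_left
          _ = ENNReal.ofReal (δ + D - δ) := Real.volume_Icc
          _ = ENNReal.ofReal D := by ring_nf
      · rw [Set.indicator_of_notMem (fun hc => hmem hc.2)]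
        have hz : ∀ s ∈ Set.Ioi (0:ℝ), A.indicator (fun _ => (1:ℝ≥0∞)) (s • θ) *
            ENNReal.ofReal (s ^ (-1-α) * q s * φ s) ≤ 0 := by
          intro s hs
          have hsA : s • θ ∉ A := fun h => hmem (geom θ hθ s (mem_Ioi.mp hs) h)
          rw [Set.indicator_of_notMem hsA, zero_mul]
        calc (∫⁻ s in Set.Ioi (0:ℝ), A.indicator (fun _ => (1:ℝ≥0∞)) (s • θ) *
              ENNReal.ofReal (s ^ (-1-α) * q s * φ s))
            ≤ ∫⁻ _ in Set.Ioi (0:ℝ), (0:ℝ≥0∞) := setLIntegral_mono measurable_const hz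
          _ = 0 := lintegral_zero
    -- outer integral
    have hsph : ∀ᵐ θ ∂μ, θ ∈ sphere (0 : Euc d) 1 := by
      rw [ae_iff]
      exact hμγ.1
    have houter : (∫⁻ θ, (∫⁻ s in Set.Ioi (0:ℝ),
        A.indicator (fun _ => (1:ℝ≥0∞)) (s • θ) *
          ENNReal.ofReal (s ^ (-1-α) * q s * φ s)) ∂μ) ≤
        ∫⁻ θ, cap.indicator (fun _ => K) θ ∂μ := by
      refine lintegral_mono_ae ?_
      filter_upwards [hsph] with θ hθ
      exact inner_bound θ (mem_sphere_zero_iff_norm.mp hθ)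
    have hcapmeas : MeasurableSet cap :=
      (isClosed_sphere.measurableSet).inter measurableSet_ball
    have hcapint : (∫⁻ θ, cap.indicator (fun _ => K) θ ∂μ) = K * μ cap := by
      rw [lintegral_indicator hcapmeas, setLIntegral_const]
    have hcapμ : μ cap ≤ ENNReal.ofReal (cμ * ρ ^ (γ-1)) := hμγ.2 θ0 hθ0norm ρ hρ
    -- assemble
    have main : ν A ≤ K * ENNReal.ofReal (cμ * ρ ^ (γ-1)) := by
      calc ν A ≤ _ := hdom A hA
        _ ≤ ∫⁻ θ, cap.indicator (fun _ => K) θ ∂μ := houter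
        _ = K * μ cap := hcapint
        _ ≤ K * ENNReal.ofReal (cμ * ρ ^ (γ-1)) := mul_le_mul_right hcapμ K
    refine main.trans ?_
    rw [hKdef, hcdef, ← ENNReal.ofReal_mul (by positivity), ← ENNReal.ofReal_mul (by positivity)]
    apply ENNReal.ofReal_le_ofReal
    -- real arithmetic
    have e1 : ρ ^ (γ-1) = 3 ^ (γ-1) * D ^ (γ-1) / δ ^ (γ-1) := by
      rw [hρdef, Real.div_rpow (by positivity) hδ.le, Real.mul_rpow (by norm_num) hD.le]
    have e2 : δ ^ (-γ-α) = δ ^ (-1-α) / δ ^ (γ-1) := by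
      rw [← Real.rpow_sub hδ]
      congr 1
      ring
    have e3 : D ^ γ = D * D ^ (γ-1) := by
      nth_rewrite 2 [← Real.rpow_one D]
      rw [← Real.rpow_add hD]
      congr 1
      ring
    have hX : (0:ℝ) ≤ δ ^ (-γ-α) * q δ * φ δ * D ^ γ := by positivity
    calc δ ^ (-1-α) * q δ * φ δ * D * (cμ * ρ ^ (γ-1))
        = (3 ^ (γ-1) * cμ) * (δ ^ (-γ-α) * q δ * φ δ * D ^ γ) := by
          rw [e1, e2, e3]; ring
      _ ≤ (3 ^ (γ-1) * cμ + 1) * (δ ^ (-γ-α) * q δ * φ δ * D ^ γ) := by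
          apply mul_le_mul_of_nonneg_right (by linarith) hX
      _ = (3 ^ (γ-1) * cμ + 1) * δ ^ (-γ-α) * q δ * φ δ * D ^ γ := by ring

end
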